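/- The polynomials D_{n,k}(t) = ∑_{j=0}^{n-k} C(n,j) C(n,k+j) t^j admit the gamma-expansion D_{n,k}(t) = ∑_{j=0}^{⌊(n-k)/2⌋} C(2j+k,j) C(n,2j+k) t^j (1+t)^{n-k-2j}. -/

import Mathlib

open Finset Polynomial

private lemma coeff_sq (r : Polynomial ℚ) (N d : ℕ) :
    (((X ^ 2 + C r) ^ N : Polynomial (Polynomial ℚ))).coeff d
      = if d % 2 = 0 then r ^ (N - d / 2) * ((N.choose (d / 2) : ℕ) : Polynomial ℚ) else 0 := by
  rw [add_pow, finset_sum_coeff]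
  have hterm : ∀ i, (((X ^ 2) ^ i * (C r) ^ (N - i) * ((N.choose i : ℕ) : Polynomial (Polynomial ℚ)))).coeff d
      = if d = 2 * i then r ^ (N - i) * ((N.choose i : ℕ) : Polynomial ℚ) else 0 := by
    intro i
    have : ((X ^ 2) ^ i * (C r) ^ (N - i) * ((N.choose i : ℕ) : Polynomial (Polynomial ℚ)))
        = C (r ^ (N - i) * ((N.choose i : ℕ) : Polynomial ℚ)) * X ^ (2 * i) := by
      rw [map_mul, ← C_pow, ← pow_mul, C_eq_natCast]
      ring
    rw [this, coeff_C_mul, coeff_X_pow]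
    by_cases h : d = 2 * i <;> simp [h]
  simp only [hterm]
  by_cases hd : d % 2 = 0
  · rw [if_pos hd, Finset.sum_eq_single (d / 2)]
    · rw [if_pos (by omega)]
    · intro i _ hne
      rw [if_neg (by omega)]
    · intro h
      rw [if_pos (by omega), Nat.choose_eq_zero_of_lt (by simp at h; omega)]
      simp
  · rw [if_neg hd, Finset.sum_eq_zero]
    intro i _
    rw [if_neg (by omega)]

private lemma lhs_coeff (n k : ℕ) (hk : k ≤ n) :
    (((X + C (X : Polynomial ℚ)) ^ n * (1 + X) ^ n : Polynomial (Polynomial ℚ))).coeff (n + k)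
      = ∑ j ∈ range (n - k + 1),
          ((n.choose j * n.choose (k + j) : ℚ)) • (X : Polynomial ℚ) ^ j := by
  rw [coeff_mul, Finset.Nat.sum_antidiagonal_eq_sum_range_succ_mk]
  simp only [coeff_X_add_C_pow, coeff_one_add_X_pow]
  have hsub : (range (n - k + 1)).image (fun j => n - j) ⊆ range (n + k + 1) := by
    intro a ha
    simp only [mem_image, mem_range] at ha ⊢
    omega
  have hzero : ∀ a ∈ range (n + k + 1), a ∉ (range (n - k + 1)).image (fun j => n - j) →
      ((X : Polynomial ℚ) ^ (n - a) * ((n.choose a : ℕ) : Polynomial ℚ)) * ((n.choose (n + k - a) : ℕ) : Polynomial ℚ) = 0 := by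
    intro a _ ha
    simp only [mem_image, mem_range, not_exists, not_and] at ha
    by_cases h1 : a ≤ n
    · by_cases h2 : k ≤ a
      · exact absurd (show n - (n - a) = a by omega) (ha (n - a) (by omega))
      · rw [Nat.choose_eq_zero_of_lt (show n < n + k - a by omega)]
        simp
    · rw [Nat.choose_eq_zero_of_lt (by omega)]
      simp
  rw [← Finset.sum_subset hsub hzero, Finset.sum_image (by intro x hx y hy h; simp only [mem_coe, mem_range] at hx hy h; omega)]
  refine Finset.sum_congr rfl fun j hj => ?_
  simp only [mem_range] at hj
  have h1 : n - (n - j) = j := by omega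
  have h2 : n + k - (n - j) = k + j := by omega
  have h3 : n.choose (n - j) = n.choose j := Nat.choose_symm (by omega)
  rw [h1, h2, h3, smul_eq_C_mul]
  rw [map_mul, C_eq_natCast, C_eq_natCast]
  ring

theorem D_nk_gamma_expansion (n k : ℕ) (hk : k ≤ n) :
    (∑ j ∈ range (n - k + 1),
        ((n.choose j * n.choose (k + j) : ℚ)) • (X : Polynomial ℚ) ^ j) =
      ∑ j ∈ range ((n - k) / 2 + 1),
        (((2 * j + k).choose j * n.choose (2 * j + k) : ℚ)) •
          ((X : Polynomial ℚ) ^ j * (1 + X) ^ (n - k - 2 * j)) := by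
  have h1 : ((X + C (X : Polynomial ℚ)) * (1 + X) : Polynomial (Polynomial ℚ))
      = X * C (1 + X) + (X ^ 2 + C X) := by
    rw [map_add, map_one]
    ring
  rw [← lhs_coeff n k hk, ← mul_pow, h1, add_pow, finset_sum_coeff]
  -- per-term coefficient computation
  have hterm : ∀ m ∈ range (n + 1),
      (((X : Polynomial (Polynomial ℚ)) * C (1 + X)) ^ m * (X ^ 2 + C X) ^ (n - m)
          * ((n.choose m : ℕ) : Polynomial (Polynomial ℚ))).coeff (n + k)
        = (1 + X) ^ m * ((n.choose m : ℕ) : Polynomial ℚ) *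
            (if (n + k - m) % 2 = 0 then
              (X : Polynomial ℚ) ^ ((n - m) - (n + k - m) / 2) * (((n - m).choose ((n + k - m) / 2) : ℕ) : Polynomial ℚ)
            else 0) := by
    intro m hm
    simp only [mem_range] at hm
    have hre : ((X : Polynomial (Polynomial ℚ)) * C (1 + X)) ^ m * (X ^ 2 + C X) ^ (n - m)
          * ((n.choose m : ℕ) : Polynomial (Polynomial ℚ))
        = C ((1 + X) ^ m * ((n.choose m : ℕ) : Polynomial ℚ)) * (X ^ m * (X ^ 2 + C X) ^ (n - m)) := by
      rw [mul_pow, map_mul, ← C_pow, C_eq_natCast]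
      ring
    have h2 := coeff_X_pow_mul (((X : Polynomial (Polynomial ℚ)) ^ 2 + C X) ^ (n - m)) m (n + k - m)
    rw [show (n + k - m) + m = n + k from by omega] at h2
    rw [hre, coeff_C_mul, h2, coeff_sq]
  rw [Finset.sum_congr rfl hterm]
  -- reindex
  have hsub : (range ((n - k) / 2 + 1)).image (fun j => n - k - 2 * j) ⊆ range (n + 1) := by
    intro a ha
    simp only [mem_image, mem_range] at ha ⊢
    omega
  have hzero : ∀ m ∈ range (n + 1), m ∉ (range ((n - k) / 2 + 1)).image (fun j => n - k - 2 * j) →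
      (1 + (X : Polynomial ℚ)) ^ m * ((n.choose m : ℕ) : Polynomial ℚ) *
            (if (n + k - m) % 2 = 0 then
              (X : Polynomial ℚ) ^ ((n - m) - (n + k - m) / 2) * (((n - m).choose ((n + k - m) / 2) : ℕ) : Polynomial ℚ)
            else 0) = 0 := by
    intro m hm hmem
    simp only [mem_range] at hm
    simp only [mem_image, mem_range, not_exists, not_and] at hmem
    by_cases hp : (n + k - m) % 2 = 0
    · by_cases hle : (n + k - m) / 2 ≤ n - m
      · exact absurd (show n - k - 2 * ((n - k - m) / 2) = m by omega)
          (hmem ((n - k - m) / 2) (by omega))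
      · rw [if_pos hp, Nat.choose_eq_zero_of_lt (show n - m < (n + k - m) / 2 by omega)]
        simp
    · rw [if_neg hp, mul_zero]
  rw [← Finset.sum_subset hsub hzero,
    Finset.sum_image (by intro x hx y hy h; simp only [mem_coe, mem_range] at hx hy h; omega)]
  refine Finset.sum_congr rfl fun j hj => ?_
  simp only [mem_range] at hj
  have hle : 2 * j + k ≤ n := by omega
  have e1 : n + k - (n - k - 2 * j) = 2 * (k + j) := by omega
  have e2 : n - (n - k - 2 * j) = k + 2 * j := by omega
  rw [e1, e2]
  rw [if_pos (by omega), show 2 * (k + j) / 2 = k + j from by omega,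
    show k + 2 * j - (k + j) = j from by omega]
  have c1 : n.choose (n - k - 2 * j) = n.choose (2 * j + k) := by
    rw [show n - k - 2 * j = n - (2 * j + k) from by omega, Nat.choose_symm hle]
  have c2 : (k + 2 * j).choose (k + j) = (2 * j + k).choose j := by
    have h := Nat.choose_symm (show k + j ≤ k + 2 * j by omega)
    rw [show k + 2 * j - (k + j) = j from by omega] at h
    rw [← h, Nat.add_comm k (2 * j)]
  rw [c1, c2, smul_eq_C_mul, map_mul, C_eq_natCast, C_eq_natCast]
  ring
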